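/- Suppose γ = (I, γ_{τ(x)}, γ_{(x)}) ∈ D_𝒢(A) satisfies: (C1) I_{τ_y⁻¹} = I_x and I_{τ_y} = I_y for all objects y; (C2) I_x is unital and γ_{(x)} admits a globalization (J_x, γ̃_{(x)}); (C3) there are a ring B, ideals {J_y}_{y∈𝒢₀} of B, and ring isomorphisms γ̃_{τ_y} : J_x → J_y with I_y an ideal of J_y and γ̃_{τ_y}|_{I_x} = γ_{τ_y}. Then β = (C_g, β_g)_{g∈𝒢} with C_g = J_{t(g)} and β_g = γ̃_{τ_{t(g)}} ∘ γ̃_{g_x} ∘ γ̃_{τ_{s(g)}}⁻¹ : J_{s(g)} → J_{t(g)} is a global action of 𝒢 on B which is a globalization of θ = Ext(γ). -/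

import Mathlib

open CategoryTheory

universe u v

def IsIdealIn {A : Type u} [NonUnitalRing A] (S T : Set A) : Prop :=
  S ⊆ T ∧ (0 : A) ∈ S ∧ (∀ a ∈ S, ∀ b ∈ S, a + b ∈ S) ∧ (∀ a ∈ S, -a ∈ S) ∧
    ∀ t ∈ T, ∀ s ∈ S, t * s ∈ S ∧ s * t ∈ S

structure PartialAction (G : Type v) [Groupoid G] (A : Type u) [NonUnitalRing A] where
  D : ∀ {x y : G}, (x ⟶ y) → Set A
  act : ∀ {x y : G}, (x ⟶ y) → A → A
  ideal_base : ∀ y : G, IsIdealIn (D (𝟙 y)) Set.univ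
  ideal_dom : ∀ {x y : G} (g : x ⟶ y), IsIdealIn (D g) (D (𝟙 y))
  act_mem : ∀ {x y : G} (g : x ⟶ y), ∀ a ∈ D (Groupoid.inv g), act g a ∈ D g
  act_add : ∀ {x y : G} (g : x ⟶ y), ∀ a ∈ D (Groupoid.inv g), ∀ b ∈ D (Groupoid.inv g),
    act g (a + b) = act g a + act g b
  act_mul : ∀ {x y : G} (g : x ⟶ y), ∀ a ∈ D (Groupoid.inv g), ∀ b ∈ D (Groupoid.inv g),
    act g (a * b) = act g a * act g b
  act_inj : ∀ {x y : G} (g : x ⟶ y), ∀ a ∈ D (Groupoid.inv g), ∀ b ∈ D (Groupoid.inv g),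
    act g a = act g b → a = b
  act_surj : ∀ {x y : G} (g : x ⟶ y), ∀ c ∈ D g, ∃ a ∈ D (Groupoid.inv g), act g a = c
  act_id : ∀ y : G, ∀ a ∈ D (𝟙 y), act (𝟙 y) a = a
  mem_comp : ∀ {w x y : G} (g : x ⟶ y) (h : w ⟶ x), ∀ a ∈ D (Groupoid.inv h),
    act h a ∈ D (Groupoid.inv g) ∩ D h → a ∈ D (Groupoid.inv (h ≫ g))
  act_comp : ∀ {w x y : G} (g : x ⟶ y) (h : w ⟶ x), ∀ a ∈ D (Groupoid.inv h),
    act h a ∈ D (Groupoid.inv g) ∩ D h → act g (act h a) = act (h ≫ g) a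

def IsId {G : Type v} [Groupoid G] {y z : G} (g : y ⟶ z) : Prop :=
  ∃ h : y = z, g = eqToHom h

/-!
STATEMENT 19: Suppose γ = (I, γ_{τ(x)}, γ_{(x)}) ∈ D_𝒢(A) satisfies
(C1) I_{τ_y⁻¹} = I_x and I_{τ_y} = I_y for all objects y (hypotheses hgt1, hgt2 on
θ = Ext(γ); under (C1), I_y = θ.D (𝟙 y), γ_{τ_y} = θ_{τ_y} and γ_{(x)} = θ_{(x)});
(C2) I_x is unital and γ_{(x)} admits a globalization (J_x, γ̃_{(x)}), given here by
the global group action β̃ of 𝒢(x) on the ideal J x of B;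
(C3) there are a ring B, ideals {J_y} of B and ring isomorphisms
γ̃_{τ_y} : J_x → J_y (given here by t̃ y with inverse t̃inv y) with I_y an ideal of
J_y and γ̃_{τ_y}|_{I_x} = γ_{τ_y}.
Then β = (C_g, β_g) with C_g = J_{t g} and
β_g = γ̃_{τ_{t g}} ∘ γ̃_{g_x} ∘ γ̃_{τ_{s g}}⁻¹ : J_{s g} → J_{t g} is a global action
of 𝒢 on B which is a globalization of θ = Ext(γ).
-/
theorem extension_partial_actions_stmt19
    {G : Type v} [Groupoid G] {A : Type u} [NonUnitalRing A]
    (hconn : ∀ a b : G, Nonempty (a ⟶ b))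
    (x : G) (τ : ∀ y : G, x ⟶ y) (hτx : τ x = 𝟙 x)
    (θ : PartialAction G A)
    -- (C1): θ = Ext(γ) is of group type
    (hgt1 : ∀ y : G, θ.D (Groupoid.inv (τ y)) = θ.D (𝟙 x))
    (hgt2 : ∀ y : G, θ.D (τ y) = θ.D (𝟙 y))
    -- (C2): I_x is unital …
    (hIxunital : ∃ u ∈ θ.D (𝟙 x), ∀ a ∈ θ.D (𝟙 x), u * a = a ∧ a * u = a)
    -- the ambient ring B of (C3), with an embedding ι of A
    {B : Type u} [NonUnitalRing B] (ι : A → B)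
    (hι_inj : Function.Injective ι)
    (hι_add : ∀ a b : A, ι (a + b) = ι a + ι b)
    (hι_mul : ∀ a b : A, ι (a * b) = ι a * ι b)
    (J : G → Set B)
    (hJ_ideal : ∀ y : G, IsIdealIn (J y) (Set.univ : Set B))
    (hIJ_ideal : ∀ y : G, IsIdealIn (ι '' θ.D (𝟙 y)) (J y))
    -- … and the globalization (J x, β̃) of γ_{(x)} = θ_{(x)} on I_x ⊆ J x (C2)
    (β' : (x ⟶ x) → B → B)
    (hβ'_mem : ∀ h : x ⟶ x, ∀ b ∈ J x, β' h b ∈ J x)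
    (hβ'_add : ∀ h : x ⟶ x, ∀ a ∈ J x, ∀ b ∈ J x, β' h (a + b) = β' h a + β' h b)
    (hβ'_mul : ∀ h : x ⟶ x, ∀ a ∈ J x, ∀ b ∈ J x, β' h (a * b) = β' h a * β' h b)
    (hβ'_bij : ∀ h : x ⟶ x, Set.BijOn (β' h) (J x) (J x))
    (hβ'_one : ∀ b ∈ J x, β' (𝟙 x) b = b)
    (hβ'_comp : ∀ g h : x ⟶ x, ∀ b ∈ J x, β' g (β' h b) = β' (h ≫ g) b)
    (hβ'_res1 : ∀ h : x ⟶ x,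
      ι '' θ.D h = ι '' θ.D (𝟙 x) ∩ β' h '' (ι '' θ.D (𝟙 x)))
    (hβ'_res2 : ∀ h : x ⟶ x, ∀ a ∈ θ.D (Groupoid.inv h), β' h (ι a) = ι (θ.act h a))
    (hβ'_span : J x
      = ↑(AddSubgroup.closure (⋃ h : x ⟶ x, β' h '' (ι '' θ.D (𝟙 x)))))
    -- (C3): the isomorphisms γ̃_{τ_y} : J x → J y extending γ_{τ_y} = θ_{τ_y}
    (t' : G → B → B) (t'inv : G → B → B)
    (ht'_mem : ∀ y : G, ∀ b ∈ J x, t' y b ∈ J y)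
    (ht'_add : ∀ y : G, ∀ a ∈ J x, ∀ b ∈ J x, t' y (a + b) = t' y a + t' y b)
    (ht'_mul : ∀ y : G, ∀ a ∈ J x, ∀ b ∈ J x, t' y (a * b) = t' y a * t' y b)
    (ht'inv_mem : ∀ y : G, ∀ b ∈ J y, t'inv y b ∈ J x)
    (ht'_rightinv : ∀ y : G, ∀ b ∈ J y, t' y (t'inv y b) = b)
    (ht'_leftinv : ∀ y : G, ∀ b ∈ J x, t'inv y (t' y b) = b)
    (ht'_res : ∀ y : G, ∀ a ∈ θ.D (𝟙 x), t' y (ι a) = ι (θ.act (τ y) a)) :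
    ∃ β : PartialAction G B,
      -- β is the announced global action: C_g = J_{t g} and
      -- β_g = γ̃_{τ_{t g}} ∘ γ̃_{g_x} ∘ γ̃_{τ_{s g}}⁻¹
      (∀ {y z : G} (g : y ⟶ z), β.D g = J z) ∧
      (∀ {y z : G} (g : y ⟶ z), ∀ b ∈ J y,
        β.act g b = t' z (β' (τ y ≫ g ≫ Groupoid.inv (τ z)) (t'inv y b))) ∧
      -- and it is a globalization of θ:
      (∀ y : G, IsIdealIn (ι '' θ.D (𝟙 y)) (β.D (𝟙 y))) ∧
      (∀ {y z : G} (g : y ⟶ z),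
        ι '' θ.D g = ι '' θ.D (𝟙 z) ∩ β.act g '' (ι '' θ.D (𝟙 y))) ∧
      (∀ {y z : G} (g : y ⟶ z), ∀ a ∈ θ.D (Groupoid.inv g),
        β.act g (ι a) = ι (θ.act g a)) ∧
      (∀ z : G, β.D (𝟙 z)
        = ↑(AddSubgroup.closure
            (⋃ (w : G) (h : w ⟶ z), β.act h '' (ι '' θ.D (𝟙 w))))) := by
  classical
  -- groupoid helper
  have invinv : ∀ {y z : G} (f : y ⟶ z), Groupoid.inv (Groupoid.inv f) = f := by
    intro y z f; simp [Groupoid.inv_eq_inv]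
  -- basic set facts
  have Dsub : ∀ {y z : G} (g : y ⟶ z), θ.D g ⊆ θ.D (𝟙 z) := fun g => (θ.ideal_dom g).1
  have ιJ : ∀ y : G, ι '' θ.D (𝟙 y) ⊆ J y := fun y => (hIJ_ideal y).1
  have ιJx : ∀ a ∈ θ.D (𝟙 x), ι a ∈ J x := fun a ha => ιJ x ⟨a, ha, rfl⟩
  have hJ0 : ∀ y : G, (0 : B) ∈ J y := fun y => (hJ_ideal y).2.1
  have hJadd : ∀ y : G, ∀ a ∈ J y, ∀ b ∈ J y, a + b ∈ J y := fun y => (hJ_ideal y).2.2.1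
  have hJneg : ∀ y : G, ∀ a ∈ J y, -a ∈ J y := fun y => (hJ_ideal y).2.2.2.1
  -- t' additive on zero/neg
  have ht'_zero : ∀ y : G, t' y 0 = 0 := by
    intro y
    have h := ht'_add y 0 (hJ0 x) 0 (hJ0 x)
    rw [add_zero] at h
    exact (left_eq_add.mp h)
  have ht'_neg : ∀ y : G, ∀ b ∈ J x, t' y (-b) = -(t' y b) := by
    intro y b hb
    have h := ht'_add y b hb (-b) (hJneg x b hb)
    rw [add_neg_cancel, ht'_zero] at h
    exact (neg_eq_of_add_eq_zero_right h.symm).symm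
  -- injectivity of t' on J x
  have t'inj : ∀ y : G, ∀ a ∈ J x, ∀ b ∈ J x, t' y a = t' y b → a = b := by
    intro y a ha b hb h
    rw [← ht'_leftinv y a ha, ← ht'_leftinv y b hb, h]
  -- β' inverse cancellation
  have β'cancel : ∀ h : x ⟶ x, ∀ b ∈ J x, β' (Groupoid.inv h) (β' h b) = b := by
    intro h b hb
    rw [hβ'_comp (Groupoid.inv h) h b hb, Groupoid.comp_inv, hβ'_one b hb]
  -- L1: lifting elements of I_y to I_x along τ_y
  have L1 : ∀ y : G, ∀ a ∈ θ.D (𝟙 y),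
      ∃ c ∈ θ.D (𝟙 x), θ.act (τ y) c = a ∧ t'inv y (ι a) = ι c := by
    intro y a ha
    have ha' : a ∈ θ.D (τ y) := by rw [hgt2 y]; exact ha
    obtain ⟨c, hc, hac⟩ := θ.act_surj (τ y) a ha'
    rw [hgt1 y] at hc
    refine ⟨c, hc, hac, ?_⟩
    have h1 : t' y (ι c) = ι a := by rw [ht'_res y c hc, hac]
    rw [← h1, ht'_leftinv y (ι c) (ιJx c hc)]
  -- L2: compatibility of β with θ on arrows
  have L2 : ∀ {y z : G} (g : y ⟶ z), ∀ a ∈ θ.D (Groupoid.inv g),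
      t' z (β' (τ y ≫ g ≫ Groupoid.inv (τ z)) (t'inv y (ι a))) = ι (θ.act g a) := by
    intro y z g a ha
    have haIy : a ∈ θ.D (𝟙 y) := Dsub (Groupoid.inv g) ha
    obtain ⟨c, hc, hac, htc⟩ := L1 y a haIy
    rw [htc]
    have hga : θ.act g a ∈ θ.D g := θ.act_mem g a ha
    have hgaIz : θ.act g a ∈ θ.D (𝟙 z) := Dsub g hga
    have hgaIz' : θ.act g a ∈ θ.D (Groupoid.inv (Groupoid.inv (τ z))) := by
      rw [invinv (τ z), hgt2 z]; exact hgaIz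
    have hmemA : θ.act g a ∈ θ.D (Groupoid.inv (Groupoid.inv (τ z))) ∩ θ.D g :=
      ⟨hgaIz', hga⟩
    have hA1 : a ∈ θ.D (Groupoid.inv (g ≫ Groupoid.inv (τ z))) :=
      θ.mem_comp (Groupoid.inv (τ z)) g a ha hmemA
    have hA2 : θ.act (Groupoid.inv (τ z)) (θ.act g a) = θ.act (g ≫ Groupoid.inv (τ z)) a :=
      θ.act_comp (Groupoid.inv (τ z)) g a ha hmemA
    have hcτ : c ∈ θ.D (Groupoid.inv (τ y)) := by rw [hgt1 y]; exact hc
    have hmemB : θ.act (τ y) c ∈ θ.D (Groupoid.inv (g ≫ Groupoid.inv (τ z))) ∩ θ.D (τ y) := by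
      rw [hac]
      exact ⟨hA1, by rw [hgt2 y]; exact haIy⟩
    have hB1 : c ∈ θ.D (Groupoid.inv (τ y ≫ g ≫ Groupoid.inv (τ z))) :=
      θ.mem_comp (g ≫ Groupoid.inv (τ z)) (τ y) c hcτ hmemB
    have hB2 : θ.act (g ≫ Groupoid.inv (τ z)) (θ.act (τ y) c)
        = θ.act (τ y ≫ g ≫ Groupoid.inv (τ z)) c :=
      θ.act_comp (g ≫ Groupoid.inv (τ z)) (τ y) c hcτ hmemB
    rw [hβ'_res2 (τ y ≫ g ≫ Groupoid.inv (τ z)) c hB1]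
    have hhc : θ.act (τ y ≫ g ≫ Groupoid.inv (τ z)) c
        = θ.act (Groupoid.inv (τ z)) (θ.act g a) := by
      rw [← hB2, hac, ← hA2]
    rw [hhc]
    have hdmem : θ.act (Groupoid.inv (τ z)) (θ.act g a) ∈ θ.D (Groupoid.inv (τ z)) :=
      θ.act_mem (Groupoid.inv (τ z)) _ hgaIz'
    have hdx : θ.act (Groupoid.inv (τ z)) (θ.act g a) ∈ θ.D (𝟙 x) := by
      rw [← hgt1 z]; exact hdmem
    rw [ht'_res z _ hdx]
    congr 1
    have hmemC : θ.act (Groupoid.inv (τ z)) (θ.act g a)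
        ∈ θ.D (Groupoid.inv (τ z)) ∩ θ.D (Groupoid.inv (τ z)) := ⟨hdmem, hdmem⟩
    have hC := θ.act_comp (τ z) (Groupoid.inv (τ z)) (θ.act g a) hgaIz' hmemC
    rw [hC, Groupoid.inv_comp (τ z)]
    exact θ.act_id z _ hgaIz
  -- L3: converse direction for the range condition
  have L3 : ∀ {y z : G} (g : y ⟶ z), ∀ a ∈ θ.D (𝟙 z), ∀ b ∈ θ.D (𝟙 y),
      t' z (β' (τ y ≫ g ≫ Groupoid.inv (τ z)) (t'inv y (ι b))) = ι a → a ∈ θ.D g := by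
    intro y z g a ha b hb heq
    obtain ⟨c, hc, hbc, htc⟩ := L1 y b hb
    obtain ⟨d, hd, had, _⟩ := L1 z a ha
    rw [htc] at heq
    have hta : t' z (ι d) = ι a := by rw [ht'_res z d hd, had]
    have hβc : β' (τ y ≫ g ≫ Groupoid.inv (τ z)) (ι c) ∈ J x :=
      hβ'_mem _ _ (ιJx c hc)
    have hβd : β' (τ y ≫ g ≫ Groupoid.inv (τ z)) (ι c) = ι d := by
      apply t'inj z _ hβc _ (ιJx d hd)
      rw [heq, hta]
    -- c ∈ θ.D (inv h)
    have hcinv : ι c = β' (Groupoid.inv (τ y ≫ g ≫ Groupoid.inv (τ z))) (ι d) := by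
      rw [← hβd, β'cancel _ _ (ιJx c hc)]
    have hcmem : ι c ∈ ι '' θ.D (Groupoid.inv (τ y ≫ g ≫ Groupoid.inv (τ z))) := by
      rw [hβ'_res1]
      exact ⟨⟨c, hc, rfl⟩, by rw [hcinv]; exact ⟨ι d, ⟨d, hd, rfl⟩, rfl⟩⟩
    obtain ⟨c', hc', hcc'⟩ := hcmem
    have hc'' : c ∈ θ.D (Groupoid.inv (τ y ≫ g ≫ Groupoid.inv (τ z))) := by
      rwa [hι_inj hcc'] at hc'
    -- d = θ.act h c
    have hdc : d = θ.act (τ y ≫ g ≫ Groupoid.inv (τ z)) c := by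
      apply hι_inj
      rw [← hβd, hβ'_res2 _ c hc'']
    -- step τ: a = θ.act ((τ y ≫ g ≫ inv τ z) ≫ τ z) c
    have hhc : θ.act (τ y ≫ g ≫ Groupoid.inv (τ z)) c
        ∈ θ.D (τ y ≫ g ≫ Groupoid.inv (τ z)) := θ.act_mem _ c hc''
    have hhcx : θ.act (τ y ≫ g ≫ Groupoid.inv (τ z)) c ∈ θ.D (𝟙 x) := Dsub _ hhc
    have hmemT : θ.act (τ y ≫ g ≫ Groupoid.inv (τ z)) c
        ∈ θ.D (Groupoid.inv (τ z)) ∩ θ.D (τ y ≫ g ≫ Groupoid.inv (τ z)) := by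
      refine ⟨?_, hhc⟩
      rw [hgt1 z]; exact hhcx
    have hT1 : c ∈ θ.D (Groupoid.inv ((τ y ≫ g ≫ Groupoid.inv (τ z)) ≫ τ z)) :=
      θ.mem_comp (τ z) _ c hc'' hmemT
    have hT2 : θ.act (τ z) (θ.act (τ y ≫ g ≫ Groupoid.inv (τ z)) c)
        = θ.act ((τ y ≫ g ≫ Groupoid.inv (τ z)) ≫ τ z) c :=
      θ.act_comp (τ z) _ c hc'' hmemT
    have haT : a = θ.act ((τ y ≫ g ≫ Groupoid.inv (τ z)) ≫ τ z) c := by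
      rw [← hT2, ← hdc, had]
    -- step e: b = θ.act (τ y) c, and act (inv τ y) b = c
    have hcτ : c ∈ θ.D (Groupoid.inv (τ y)) := by rw [hgt1 y]; exact hc
    have hbτ : b ∈ θ.D (τ y) := by rw [hgt2 y]; exact hb
    have hbinvinv : b ∈ θ.D (Groupoid.inv (Groupoid.inv (τ y))) := by
      rw [invinv (τ y)]; exact hbτ
    have hmemI : θ.act (τ y) c ∈ θ.D (Groupoid.inv (Groupoid.inv (τ y))) ∩ θ.D (τ y) := by
      rw [hbc]; exact ⟨hbinvinv, hbτ⟩
    have hinvb : θ.act (Groupoid.inv (τ y)) b = c := by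
      rw [← hbc, θ.act_comp (Groupoid.inv (τ y)) (τ y) c hcτ hmemI, Groupoid.comp_inv]
      exact θ.act_id x c hc
    have hmemE : θ.act (Groupoid.inv (τ y)) b
        ∈ θ.D (Groupoid.inv ((τ y ≫ g ≫ Groupoid.inv (τ z)) ≫ τ z))
          ∩ θ.D (Groupoid.inv (τ y)) := by
      rw [hinvb]; exact ⟨hT1, hcτ⟩
    have hE1 : b ∈ θ.D (Groupoid.inv (Groupoid.inv (τ y)
        ≫ (τ y ≫ g ≫ Groupoid.inv (τ z)) ≫ τ z)) :=
      θ.mem_comp ((τ y ≫ g ≫ Groupoid.inv (τ z)) ≫ τ z) (Groupoid.inv (τ y)) b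
        hbinvinv hmemE
    have hE2 : θ.act ((τ y ≫ g ≫ Groupoid.inv (τ z)) ≫ τ z)
          (θ.act (Groupoid.inv (τ y)) b)
        = θ.act (Groupoid.inv (τ y) ≫ (τ y ≫ g ≫ Groupoid.inv (τ z)) ≫ τ z) b :=
      θ.act_comp ((τ y ≫ g ≫ Groupoid.inv (τ z)) ≫ τ z) (Groupoid.inv (τ y)) b
        hbinvinv hmemE
    have hgeq : Groupoid.inv (τ y) ≫ (τ y ≫ g ≫ Groupoid.inv (τ z)) ≫ τ z = g := by
      simp [Groupoid.inv_eq_inv]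
    rw [hgeq] at hE1 hE2
    have : a = θ.act g b := by rw [haT, ← hinvb, hE2]
    rw [this]
    exact θ.act_mem g b hE1
  -- define the global action
  refine ⟨{
    D := fun {y z} _ => J z
    act := fun {y z} g b => t' z (β' (τ y ≫ g ≫ Groupoid.inv (τ z)) (t'inv y b))
    ideal_base := fun y => hJ_ideal y
    ideal_dom := ?_
    act_mem := ?_
    act_add := ?_
    act_mul := ?_
    act_inj := ?_
    act_surj := ?_
    act_id := ?_
    mem_comp := ?_
    act_comp := ?_ }, ?_, ?_, ?_, ?_, ?_, ?_⟩
  · -- ideal_dom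
    intro y z g
    exact ⟨Set.Subset.rfl, hJ0 z, hJadd z, hJneg z,
      fun t ht s hs => ((hJ_ideal z).2.2.2.2 t (Set.mem_univ t) s hs)⟩
  · -- act_mem
    intro y z g a ha
    exact ht'_mem z _ (hβ'_mem _ _ (ht'inv_mem y a ha))
  · -- act_add
    intro y z g a ha b hb
    beta_reduce
    have h1 : ∀ c ∈ J y, β' (τ y ≫ g ≫ Groupoid.inv (τ z)) (t'inv y c) ∈ J x :=
      fun c hc => hβ'_mem _ _ (ht'inv_mem y c hc)
    have htinv : t'inv y (a + b) = t'inv y a + t'inv y b := by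
      apply t'inj y _ (ht'inv_mem y _ (hJadd y a ha b hb)) _
        (hJadd x _ (ht'inv_mem y a ha) _ (ht'inv_mem y b hb))
      rw [ht'_rightinv y _ (hJadd y a ha b hb),
        ht'_add y _ (ht'inv_mem y a ha) _ (ht'inv_mem y b hb),
        ht'_rightinv y a ha, ht'_rightinv y b hb]
    rw [htinv, hβ'_add _ _ (ht'inv_mem y a ha) _ (ht'inv_mem y b hb),
      ht'_add z _ (h1 a ha) _ (h1 b hb)]
  · -- act_mul
    intro y z g a ha b hb
    beta_reduce
    have h1 : ∀ c ∈ J y, β' (τ y ≫ g ≫ Groupoid.inv (τ z)) (t'inv y c) ∈ J x :=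
      fun c hc => hβ'_mem _ _ (ht'inv_mem y c hc)
    have hmulJ : a * b ∈ J y := ((hJ_ideal y).2.2.2.2 a (Set.mem_univ a) b hb).1
    have hmulJx : t'inv y a * t'inv y b ∈ J x :=
      ((hJ_ideal x).2.2.2.2 _ (Set.mem_univ _) _ (ht'inv_mem y b hb)).1
    have htinv : t'inv y (a * b) = t'inv y a * t'inv y b := by
      apply t'inj y _ (ht'inv_mem y _ hmulJ) _ hmulJx
      rw [ht'_rightinv y _ hmulJ,
        ht'_mul y _ (ht'inv_mem y a ha) _ (ht'inv_mem y b hb),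
        ht'_rightinv y a ha, ht'_rightinv y b hb]
    rw [htinv, hβ'_mul _ _ (ht'inv_mem y a ha) _ (ht'inv_mem y b hb),
      ht'_mul z _ (h1 a ha) _ (h1 b hb)]
  · -- act_inj
    intro y z g a ha b hb h
    beta_reduce at h
    have h1 : ∀ c ∈ J y, β' (τ y ≫ g ≫ Groupoid.inv (τ z)) (t'inv y c) ∈ J x :=
      fun c hc => hβ'_mem _ _ (ht'inv_mem y c hc)
    have h2 := t'inj z _ (h1 a ha) _ (h1 b hb) h
    have h3 := (hβ'_bij (τ y ≫ g ≫ Groupoid.inv (τ z))).injOn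
      (ht'inv_mem y a ha) (ht'inv_mem y b hb) h2
    rw [← ht'_rightinv y a ha, ← ht'_rightinv y b hb, h3]
  · -- act_surj
    intro y z g c hc
    obtain ⟨b, hb, hbeq⟩ := (hβ'_bij (τ y ≫ g ≫ Groupoid.inv (τ z))).surjOn
      (ht'inv_mem z c hc)
    refine ⟨t' y b, ht'_mem y b hb, ?_⟩
    beta_reduce
    rw [ht'_leftinv y b hb, hbeq, ht'_rightinv z c hc]
  · -- act_id
    intro z a ha
    beta_reduce
    have h1 : τ z ≫ 𝟙 z ≫ Groupoid.inv (τ z) = 𝟙 x := by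
      simp [Groupoid.inv_eq_inv]
    rw [h1, hβ'_one _ (ht'inv_mem z a ha), ht'_rightinv z a ha]
  · -- mem_comp
    intro w y z g h a ha _
    exact ha
  · -- act_comp
    intro w y z g h a ha _
    beta_reduce
    have hb : t'inv w a ∈ J x := ht'inv_mem w a ha
    have hb1 : β' (τ w ≫ h ≫ Groupoid.inv (τ y)) (t'inv w a) ∈ J x := hβ'_mem _ _ hb
    rw [ht'_leftinv y _ hb1, hβ'_comp _ _ _ hb]
    congr 2
    simp [Groupoid.inv_eq_inv]
  · -- β.D g = J z
    intro y z g; rfl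
  · -- formula for β.act
    intro y z g b _; rfl
  · -- ideal condition
    intro y; exact hIJ_ideal y
  · -- range condition
    intro y z g
    ext b
    constructor
    · rintro ⟨a, ha, rfl⟩
      have haz : a ∈ θ.D (𝟙 z) := Dsub g ha
      obtain ⟨c, hc, hca⟩ := θ.act_surj g a ha
      have hcy : c ∈ θ.D (𝟙 y) := Dsub (Groupoid.inv g) hc
      refine ⟨⟨a, haz, rfl⟩, ?_⟩
      refine ⟨ι c, ⟨c, hcy, rfl⟩, ?_⟩
      show t' z (β' (τ y ≫ g ≫ Groupoid.inv (τ z)) (t'inv y (ι c))) = ι a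
      rw [L2 g c hc, hca]
    · rintro ⟨⟨a, ha, rfl⟩, d, ⟨c, hcy, rfl⟩, heq⟩
      exact ⟨a, L3 g a ha c hcy heq, rfl⟩
  · -- compatibility
    intro y z g a ha
    exact L2 g a ha
  · -- span condition
    intro z
    have hS : (⋃ (w : G) (h : w ⟶ z),
        (fun b => t' z (β' (τ w ≫ h ≫ Groupoid.inv (τ z)) (t'inv w b))) '' (ι '' θ.D (𝟙 w)))
        = t' z '' (⋃ h : x ⟶ x, β' h '' (ι '' θ.D (𝟙 x))) := by
      apply Set.Subset.antisymm
      · rintro b hb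
        simp only [Set.mem_iUnion, Set.mem_image] at hb
        obtain ⟨w, k, e, ⟨a, ha, rfl⟩, rfl⟩ := hb
        obtain ⟨c, hc, -, htc⟩ := L1 w a ha
        rw [htc]
        exact ⟨β' (τ w ≫ k ≫ Groupoid.inv (τ z)) (ι c),
          Set.mem_iUnion.mpr ⟨τ w ≫ k ≫ Groupoid.inv (τ z), ⟨ι c, ⟨c, hc, rfl⟩, rfl⟩⟩, rfl⟩
      · rintro b hb
        simp only [Set.mem_image, Set.mem_iUnion] at hb
        obtain ⟨e, ⟨h, c', ⟨a, ha, rfl⟩, rfl⟩, rfl⟩ := hb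
        simp only [Set.mem_iUnion, Set.mem_image]
        refine ⟨x, h ≫ τ z, ι a, ⟨a, ha, rfl⟩, ?_⟩
        have h1 : τ x ≫ (h ≫ τ z) ≫ Groupoid.inv (τ z) = h := by
          rw [hτx]; simp [Groupoid.inv_eq_inv]
        have h2 : t'inv x (ι a) = ι a := by
          have : t' x (ι a) = ι a := by
            rw [ht'_res x a ha, hτx, θ.act_id x a ha]
          have h3 := ht'_leftinv x (ι a) (ιJx a ha)
          rwa [this] at h3
        rw [h1, h2]
      -- end hS
    show J z = _
    have hSsub : ∀ b ∈ (⋃ (w : G) (h : w ⟶ z),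
        (fun b => t' z (β' (τ w ≫ h ≫ Groupoid.inv (τ z)) (t'inv w b))) '' (ι '' θ.D (𝟙 w))),
        b ∈ J z := by
      intro b hb
      rw [hS] at hb
      obtain ⟨e, he, rfl⟩ := hb
      simp only [Set.mem_iUnion, Set.mem_image] at he
      obtain ⟨h, c, ⟨a, ha, rfl⟩, rfl⟩ := he
      exact ht'_mem z _ (hβ'_mem h _ (ιJx a ha))
    ext b
    constructor
    · intro hb
      -- b ∈ J z; write b = t' z c, c ∈ J x = closure T
      have hc : t'inv z b ∈ J x := ht'inv_mem z b hb
      rw [hβ'_span] at hc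
      have key : ∀ c, c ∈ AddSubgroup.closure (⋃ h : x ⟶ x, β' h '' (ι '' θ.D (𝟙 x))) →
          c ∈ J x ∧ t' z c ∈ AddSubgroup.closure (⋃ (w : G) (h : w ⟶ z),
            (fun b => t' z (β' (τ w ≫ h ≫ Groupoid.inv (τ z)) (t'inv w b)))
              '' (ι '' θ.D (𝟙 w))) := by
        intro c hcmem
        induction hcmem using AddSubgroup.closure_induction with
        | mem d hd =>
          obtain ⟨S, ⟨h, rfl⟩, e, ⟨a, ha, rfl⟩, rfl⟩ := hd
          refine ⟨hβ'_mem h _ (ιJx a ha), AddSubgroup.subset_closure ?_⟩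
          rw [hS]
          exact ⟨β' h (ι a), Set.mem_iUnion.mpr ⟨h, ι a, ⟨a, ha, rfl⟩, rfl⟩, rfl⟩
        | zero => exact ⟨hJ0 x, by rw [ht'_zero z]; exact zero_mem _⟩
        | add c d hc hd ihc ihd =>
          exact ⟨hJadd x c ihc.1 d ihd.1,
            by rw [ht'_add z c ihc.1 d ihd.1]; exact add_mem ihc.2 ihd.2⟩
        | neg c hc ihc =>
          exact ⟨hJneg x c ihc.1, by rw [ht'_neg z c ihc.1]; exact neg_mem ihc.2⟩
      have := (key _ hc).2
      rwa [ht'_rightinv z b hb] at this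
    · intro hb
      have : AddSubgroup.closure (⋃ (w : G) (h : w ⟶ z),
          (fun b => t' z (β' (τ w ≫ h ≫ Groupoid.inv (τ z)) (t'inv w b)))
            '' (ι '' θ.D (𝟙 w))) ≤ AddSubgroup.mk
            ⟨⟨J z, fun {a b} ha hb => hJadd z a ha b hb⟩, hJ0 z⟩
            (fun {a} ha => hJneg z a ha) := by
        apply AddSubgroup.closure_le _ |>.mpr
        intro e he
        exact hSsub e he
      exact this hb
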